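/- Consider a GWO stagnation process with horizon T ≥ 2, guiding positions p₁, p₂, p₃, center c = (p₁ + p₂ + p₃)/3, and step sizes a(t) = 2(1 - t/T), and assume that X(1) is uniformly distributed on a nondegenerate interval [α, β]. Set d₁ = max(|α - c|, |β - c|). Then for every natural number t with 2 ≤ t ≤ T, every real u with |u - c| < d₁·∏_{τ=1}^{t-1} a(τ) belongs to the topological support of the law of X(t). -/

import Mathlib

open MeasureTheory ProbabilityTheory Set

/-- The GWO step sizes `a(t) = 2 (1 - t/T)`. -/
noncomputable def gwoStep (T t : ℕ) : ℝ := 2 * (1 - (t : ℝ) / (T : ℝ))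

/-- A GWO stagnation process with horizon `T`, guiding positions
`p 0, p 1, p 2` and step sizes `a(t) = 2 (1 - t/T)`: random positions `X t`
and random coefficients `A t k ~ U[-a(t), a(t)]`, `C t k ~ U[0, 2]` such that
for each `t` the seven random variables `X t, A t k, C t k` are mutually
independent and the GWO update equation holds pointwise. -/
structure GWOStagnationProcess {Ω : Type*} [MeasurableSpace Ω] (P : Measure Ω)
    (T : ℕ) (p : Fin 3 → ℝ) where
  X : ℕ → Ω → ℝ
  A : ℕ → Fin 3 → Ω → ℝ
  C : ℕ → Fin 3 → Ω → ℝ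
  measX : ∀ t, Measurable (X t)
  measA : ∀ t k, Measurable (A t k)
  measC : ∀ t k, Measurable (C t k)
  lawA : ∀ t, 1 ≤ t → t ≤ T - 1 → ∀ k,
    Measure.map (A t k) P
      = (volume (Icc (-(gwoStep T t)) (gwoStep T t)))⁻¹ •
          volume.restrict (Icc (-(gwoStep T t)) (gwoStep T t))
  lawC : ∀ t, 1 ≤ t → t ≤ T - 1 → ∀ k,
    Measure.map (C t k) P
      = (volume (Icc (0:ℝ) 2))⁻¹ • volume.restrict (Icc (0:ℝ) 2)
  indep : ∀ t, 1 ≤ t → t ≤ T - 1 →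
    iIndepFun (m := fun _ : Fin 7 => (inferInstance : MeasurableSpace ℝ))
      ![X t, A t 0, A t 1, A t 2, C t 0, C t 1, C t 2] P
  update : ∀ t, 1 ≤ t → t ≤ T - 1 → ∀ ω,
    X (t + 1) ω
      = (1/3 : ℝ) * ∑ k : Fin 3, (p k + A t k ω * |C t k ω * p k - X t ω|)

lemma gwoStep_pos {T t : ℕ} (h : t < T) : 0 < gwoStep T t := by
  have hT0 : (0:ℝ) < T := Nat.cast_pos.mpr (lt_of_le_of_lt (Nat.zero_le t) h)
  have h1 : (t:ℝ)/T < 1 := (div_lt_one hT0).mpr (Nat.cast_lt.mpr h)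
  unfold gwoStep; linarith

lemma uniform_ball_pos {l r : ℝ} (hlr : l < r) {x : ℝ} (hx : x ∈ Icc l r)
    {ε : ℝ} (hε : 0 < ε) :
    0 < ((volume (Icc l r))⁻¹ • volume.restrict (Icc l r)) (Metric.ball x ε) := by
  have hmeas : MeasurableSet (Metric.ball x ε) := measurableSet_ball
  rw [Measure.smul_apply, Measure.restrict_apply hmeas, smul_eq_mul]
  obtain ⟨hx1, hx2⟩ := hx
  have hlt : max l (x - ε) < min r (x + ε) := by
    rw [max_lt_iff]
    constructor <;> rw [lt_min_iff] <;> constructor <;> linarith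
  have hsub : Ioo (max l (x - ε)) (min r (x + ε)) ⊆ Metric.ball x ε ∩ Icc l r := by
    intro y ⟨h1, h2⟩
    have hl1 := lt_of_le_of_lt (le_max_left _ _) h1
    have hl2 := lt_of_le_of_lt (le_max_right _ _) h1
    have hr1 := lt_of_lt_of_le h2 (min_le_left _ _)
    have hr2 := lt_of_lt_of_le h2 (min_le_right _ _)
    refine ⟨?_, le_of_lt hl1, le_of_lt hr1⟩
    rw [Metric.mem_ball, Real.dist_eq, abs_lt]
    constructor <;> linarith
  have hIoo : 0 < volume (Ioo (max l (x - ε)) (min r (x + ε))) := by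
    rw [Real.volume_Ioo]
    exact ENNReal.ofReal_pos.mpr (by linarith)
  refine ENNReal.mul_pos ?_ ?_
  · rw [Real.volume_Icc]
    exact ENNReal.inv_ne_zero.mpr ENNReal.ofReal_ne_top
  · exact ne_of_gt (lt_of_lt_of_le hIoo (measure_mono hsub))


lemma gwo_step_support
    {Ω : Type*} [MeasurableSpace Ω] (P : Measure Ω) [IsProbabilityMeasure P]
    (T : ℕ) (p : Fin 3 → ℝ)
    (proc : GWOStagnationProcess P T p)
    (c : ℝ) (hc : c = (p 0 + p 1 + p 2) / 3)
    (t : ℕ) (ht1 : 1 ≤ t) (ht2 : t ≤ T - 1)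
    (x₀ : ℝ) (hx₀ : ∀ ε : ℝ, 0 < ε → 0 < Measure.map (proc.X t) P (Metric.ball x₀ ε))
    (u : ℝ) (hu : |u - c| < gwoStep T t * |x₀ - c|) :
    ∀ ε : ℝ, 0 < ε → 0 < Measure.map (proc.X (t+1)) P (Metric.ball u ε) := by
  intro ε hε
  have htT : t < T := by omega
  set a := gwoStep T t with ha
  have hapos : 0 < a := gwoStep_pos htT
  have hxc : 0 < |x₀ - c| := by
    rcases lt_or_ge 0 |x₀ - c| with h | h
    · exact h
    · have h0 : |x₀ - c| = 0 := le_antisymm h (abs_nonneg _)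
      rw [h0, mul_zero] at hu
      exact absurd hu (not_lt.mpr (abs_nonneg _))
  set W : ℝ := |p 0 - x₀| + |p 1 - x₀| + |p 2 - x₀| with hW
  have hW3 : 3 * |x₀ - c| ≤ W := by
    have h1 : |p 0 - x₀ + (p 1 - x₀) + (p 2 - x₀)| ≤ W := by
      calc |p 0 - x₀ + (p 1 - x₀) + (p 2 - x₀)|
          ≤ |p 0 - x₀ + (p 1 - x₀)| + |p 2 - x₀| := abs_add_le _ _
        _ ≤ |p 0 - x₀| + |p 1 - x₀| + |p 2 - x₀| := by
            have := abs_add_le (p 0 - x₀) (p 1 - x₀); linarith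
    have h2 : p 0 - x₀ + (p 1 - x₀) + (p 2 - x₀) = 3 * (c - x₀) := by rw [hc]; ring
    have h3 : |(3:ℝ) * (c - x₀)| = 3 * |x₀ - c| := by
      rw [abs_mul, abs_sub_comm]; norm_num
    rw [h2, h3] at h1
    exact h1
  have hWpos : 0 < W := by linarith
  set lam : ℝ := 3 * (u - c) / W with hlam
  have hlam_lt : |lam| < a := by
    rw [hlam, abs_div, abs_of_pos hWpos, div_lt_iff₀ hWpos, abs_mul]
    have h3 : |(3:ℝ)| = 3 := by norm_num
    rw [h3]
    nlinarith [abs_nonneg (u - c)]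
  -- the continuous update map
  set g : (Fin 7 → ℝ) → ℝ := fun v =>
    (1/3 : ℝ) * ((p 0 + v 1 * |v 4 * p 0 - v 0|) + (p 1 + v 2 * |v 5 * p 1 - v 0|)
      + (p 2 + v 3 * |v 6 * p 2 - v 0|)) with hg
  have hgcont : Continuous g := by
    apply continuous_const.mul
    apply Continuous.add
    apply Continuous.add
    · exact continuous_const.add ((continuous_apply 1).mul
        (((continuous_apply 4).mul continuous_const).sub (continuous_apply 0)).abs)
    · exact continuous_const.add ((continuous_apply 2).mul
        (((continuous_apply 5).mul continuous_const).sub (continuous_apply 0)).abs)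
    · exact continuous_const.add ((continuous_apply 3).mul
        (((continuous_apply 6).mul continuous_const).sub (continuous_apply 0)).abs)
  set v₀ : Fin 7 → ℝ := ![x₀, lam, lam, lam, 1, 1, 1] with hv₀
  have ev0 : v₀ 0 = x₀ := rfl
  have ev1 : v₀ 1 = lam := rfl
  have ev2 : v₀ 2 = lam := rfl
  have ev3 : v₀ 3 = lam := rfl
  have ev4 : v₀ 4 = 1 := rfl
  have ev5 : v₀ 5 = 1 := rfl
  have ev6 : v₀ 6 = 1 := rfl
  have hgv₀ : g v₀ = u := by
    have key : lam * (|p 0 - x₀| + |p 1 - x₀| + |p 2 - x₀|) = 3 * (u - c) := by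
      rw [hlam, ← hW]
      field_simp
    rw [hc] at key
    show (1/3 : ℝ) * ((p 0 + v₀ 1 * |v₀ 4 * p 0 - v₀ 0|) + (p 1 + v₀ 2 * |v₀ 5 * p 1 - v₀ 0|)
      + (p 2 + v₀ 3 * |v₀ 6 * p 2 - v₀ 0|)) = u
    rw [ev0, ev1, ev2, ev3, ev4, ev5, ev6, one_mul, one_mul, one_mul]
    linear_combination (1/3 : ℝ) * key
  have hcontAt := Metric.continuousAt_iff.mp (hgcont.continuousAt (x := v₀))
  obtain ⟨δ, hδpos, hδ⟩ := hcontAt ε hε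
  set F : Fin 7 → Ω → ℝ :=
    ![proc.X t, proc.A t 0, proc.A t 1, proc.A t 2, proc.C t 0, proc.C t 1, proc.C t 2]
    with hF
  have eF0 : F 0 = proc.X t := rfl
  have eF1 : F 1 = proc.A t 0 := rfl
  have eF2 : F 2 = proc.A t 1 := rfl
  have eF3 : F 3 = proc.A t 2 := rfl
  have eF4 : F 4 = proc.C t 0 := rfl
  have eF5 : F 5 = proc.C t 1 := rfl
  have eF6 : F 6 = proc.C t 2 := rfl
  have hind := (iIndepFun_iff_measure_inter_preimage_eq_mul.mp (proc.indep t ht1 ht2))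
    Finset.univ (sets := fun i => Metric.ball (v₀ i) δ) (fun i _ => measurableSet_ball)
  have hUniv : (⋂ i ∈ (Finset.univ : Finset (Fin 7)), F i ⁻¹' Metric.ball (v₀ i) δ)
      = ⋂ i, F i ⁻¹' Metric.ball (v₀ i) δ := by simp
  rw [hUniv] at hind
  have hlamIcc : lam ∈ Icc (-a) a := by
    have hab := abs_lt.mp hlam_lt
    exact ⟨le_of_lt hab.1, le_of_lt hab.2⟩
  have h1Icc : (1:ℝ) ∈ Icc (0:ℝ) 2 := by norm_num
  have hA : ∀ k, (0:ENNReal) < P (proc.A t k ⁻¹' Metric.ball lam δ) := by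
    intro k
    rw [← Measure.map_apply (proc.measA t k) measurableSet_ball, proc.lawA t ht1 ht2 k]
    exact uniform_ball_pos (by linarith) hlamIcc hδpos
  have hC : ∀ k, (0:ENNReal) < P (proc.C t k ⁻¹' Metric.ball 1 δ) := by
    intro k
    rw [← Measure.map_apply (proc.measC t k) measurableSet_ball, proc.lawC t ht1 ht2 k]
    exact uniform_ball_pos (by norm_num) h1Icc hδpos
  have hXpos : (0:ENNReal) < P (proc.X t ⁻¹' Metric.ball x₀ δ) := by
    rw [← Measure.map_apply (proc.measX t) measurableSet_ball]
    exact hx₀ δ hδpos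
  have hprodpos : 0 < ∏ i : Fin 7, P (F i ⁻¹' Metric.ball (v₀ i) δ) := by
    rw [Fin.prod_univ_seven, eF0, eF1, eF2, eF3, eF4, eF5, eF6,
      ev0, ev1, ev2, ev3, ev4, ev5, ev6]
    exact ENNReal.mul_pos (ne_of_gt (ENNReal.mul_pos (ne_of_gt (ENNReal.mul_pos
      (ne_of_gt (ENNReal.mul_pos (ne_of_gt (ENNReal.mul_pos (ne_of_gt
      (ENNReal.mul_pos (ne_of_gt hXpos) (ne_of_gt (hA 0)))) (ne_of_gt (hA 1))))
      (ne_of_gt (hA 2)))) (ne_of_gt (hC 0)))) (ne_of_gt (hC 1)))) (ne_of_gt (hC 2))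
  have hsub : (⋂ i, F i ⁻¹' Metric.ball (v₀ i) δ)
      ⊆ proc.X (t+1) ⁻¹' Metric.ball u ε := by
    intro ω hω
    simp only [Set.mem_iInter, Set.mem_preimage, Metric.mem_ball] at hω
    have hd : dist (fun i => F i ω) v₀ < δ := by
      rw [dist_pi_lt_iff hδpos]
      intro i
      exact hω i
    have hdist := hδ hd
    rw [hgv₀] at hdist
    have hXeq : proc.X (t+1) ω = g (fun i => F i ω) := by
      rw [proc.update t ht1 ht2 ω, Fin.sum_univ_three]
      show (1/3 : ℝ) * ((p 0 + proc.A t 0 ω * |proc.C t 0 ω * p 0 - proc.X t ω|)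
          + (p 1 + proc.A t 1 ω * |proc.C t 1 ω * p 1 - proc.X t ω|)
          + (p 2 + proc.A t 2 ω * |proc.C t 2 ω * p 2 - proc.X t ω|))
        = (1/3 : ℝ) * ((p 0 + F 1 ω * |F 4 ω * p 0 - F 0 ω|)
          + (p 1 + F 2 ω * |F 5 ω * p 1 - F 0 ω|)
          + (p 2 + F 3 ω * |F 6 ω * p 2 - F 0 ω|))
      rw [eF0, eF1, eF2, eF3, eF4, eF5, eF6]
    rw [Set.mem_preimage, Metric.mem_ball, hXeq]
    exact hdist
  rw [Measure.map_apply (proc.measX (t+1)) measurableSet_ball]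
  calc (0 : ENNReal) < ∏ i : Fin 7, P (F i ⁻¹' Metric.ball (v₀ i) δ) := hprodpos
    _ = P (⋂ i, F i ⁻¹' Metric.ball (v₀ i) δ) := hind.symm
    _ ≤ P (proc.X (t+1) ⁻¹' Metric.ball u ε) := measure_mono hsub

/-- Proposition 3.1 of the paper: if the initial position is uniformly
distributed on a nondegenerate interval `[α, β]`, then at every iteration
`2 ≤ t ≤ T` the topological support of the law of `X t` contains the open
interval of radius `d₁ ∏_{τ=1}^{t-1} a(τ)` about `c = (p 0 + p 1 + p 2) / 3`
(membership in the topological support is expressed by every ball around the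
point having positive measure). -/
theorem gwo_support_growth
    {Ω : Type*} [MeasurableSpace Ω] (P : Measure Ω) [IsProbabilityMeasure P]
    (T : ℕ) (hT : 2 ≤ T) (p : Fin 3 → ℝ)
    (proc : GWOStagnationProcess P T p)
    (c : ℝ) (hc : c = (p 0 + p 1 + p 2) / 3)
    (α β : ℝ) (hαβ : α < β)
    (hinit : Measure.map (proc.X 1) P
      = (volume (Icc α β))⁻¹ • volume.restrict (Icc α β))
    (d₁ : ℝ) (hd₁ : d₁ = max |α - c| |β - c|) :
    ∀ t : ℕ, 2 ≤ t → t ≤ T →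
      ∀ u : ℝ, |u - c| < d₁ * ∏ τ ∈ Finset.Icc 1 (t - 1), gwoStep T τ →
        ∀ ε : ℝ, 0 < ε → 0 < Measure.map (proc.X t) P (Metric.ball u ε) := by
  have hd₁α : |α - c| ≤ d₁ := hd₁ ▸ le_max_left _ _
  have hd₁β : |β - c| ≤ d₁ := hd₁ ▸ le_max_right _ _
  have hd₁pos : 0 < d₁ := by
    have h0 : 0 < |β - α| := abs_pos.mpr (sub_ne_zero.mpr (ne_of_gt hαβ))
    have h1 : |β - α| ≤ |β - c| + |c - α| := abs_sub_le β c α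
    rw [abs_sub_comm c α] at h1
    linarith
  obtain ⟨e, he, hed⟩ : ∃ e, e ∈ Icc α β ∧ |e - c| = d₁ := by
    rcases le_total |α - c| |β - c| with h | h
    · exact ⟨β, ⟨le_of_lt hαβ, le_refl β⟩, by rw [hd₁, max_eq_right h]⟩
    · exact ⟨α, ⟨le_refl α, le_of_lt hαβ⟩, by rw [hd₁, max_eq_left h]⟩
  have hesupp : ∀ ε : ℝ, 0 < ε → 0 < Measure.map (proc.X 1) P (Metric.ball e ε) := by
    intro ε hε
    rw [hinit]
    exact uniform_ball_pos hαβ he hε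
  have hprodpos : ∀ n : ℕ, n ≤ T - 1 →
      0 < ∏ τ ∈ Finset.Icc 1 n, gwoStep T τ := by
    intro n hn
    apply Finset.prod_pos
    intro τ hτ
    have hτ' := Finset.mem_Icc.mp hτ
    exact gwoStep_pos (by omega)
  have main : ∀ s : ℕ, s + 2 ≤ T → ∀ u : ℝ,
      |u - c| < d₁ * ∏ τ ∈ Finset.Icc 1 (s + 1), gwoStep T τ →
      ∀ ε : ℝ, 0 < ε → 0 < Measure.map (proc.X (s + 2)) P (Metric.ball u ε) := by
    intro s
    induction s with
    | zero =>
      intro hle u hu ε hε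
      rw [Finset.Icc_self, Finset.prod_singleton] at hu
      refine gwo_step_support P T p proc c hc 1 le_rfl (by omega) e hesupp u ?_ ε hε
      rw [hed, mul_comm]
      exact hu
    | succ s ih =>
      intro hle u hu ε hε
      rw [Finset.prod_Icc_succ_top (by omega : 1 ≤ s + 1 + 1)] at hu
      set dt := d₁ * ∏ τ ∈ Finset.Icc 1 (s + 1), gwoStep T τ with hdt
      have hdtpos : 0 < dt := mul_pos hd₁pos (hprodpos (s + 1) (by omega))
      set a2 := gwoStep T (s + 1 + 1) with ha2
      have ha2pos : 0 < a2 := gwoStep_pos (by omega)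
      have hu' : |u - c| < dt * a2 := by rw [hdt, mul_assoc]; exact hu
      set m := (|u - c| / a2 + dt) / 2 with hm
      have hm1 : |u - c| / a2 < dt := (div_lt_iff₀ ha2pos).mpr hu'
      have hmlt : m < dt := by rw [hm]; linarith
      have hmgt : |u - c| / a2 < m := by rw [hm]; linarith
      have hmpos : 0 < m := by
        have := div_nonneg (abs_nonneg (u - c)) (le_of_lt ha2pos)
        rw [hm]; linarith
      have hx₀c : |c + m - c| = m := by
        rw [add_sub_cancel_left, abs_of_pos hmpos]
      have hsupp' := ih (by omega) (c + m) (by rw [hx₀c]; exact hmlt) -- needs right form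
      refine gwo_step_support P T p proc c hc (s + 2) (by omega) (by omega)
        (c + m) ?_ u ?_ ε hε
      · exact hsupp'
      · rw [hx₀c]
        calc |u - c| < m * a2 := (div_lt_iff₀ ha2pos).mp hmgt
          _ = gwoStep T (s + 2) * m := by rw [← ha2, mul_comm]
  intro t ht2 htT u hu ε hε
  obtain ⟨s, rfl⟩ : ∃ s, t = s + 2 := ⟨t - 2, by omega⟩
  have h1 : s + 2 - 1 = s + 1 := by omega
  rw [h1] at hu
  exact main s htT u hu ε hε
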